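/- Let X_1,…,X_n be independent mean-zero real random variables with S = X_1+…+X_n, Var[S] ≤ σ², and |X_i| ≤ M almost surely for all i. Then for every t ≥ 0, Pr[S ≥ t] ≤ exp(−(t/(2M))·log(tM/σ² + 1)). -/

import Mathlib

open Real intervalIntegral in
lemma log_ineq_aux {u : ℝ} (hu : 0 ≤ u) : u ≤ (1 + u / 2) * Real.log (1 + u) := by
  have h1u : (0:ℝ) < 1 + u := by linarith
  have key : 2 * u / (2 + u) ≤ Real.log (1 + u) := by
    have hsub : Set.uIcc (1:ℝ) (1+u) = Set.Icc 1 (1+u) :=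
      Set.uIcc_of_le (by linarith : (1:ℝ) ≤ 1 + u)
    have hlog : Real.log (1 + u) = ∫ x in (1:ℝ)..(1+u), x⁻¹ := by
      rw [integral_inv (by rw [hsub]; intro h; exact absurd h.1 (by norm_num)), div_one]
    have hderiv : ∀ x ∈ Set.uIcc (1:ℝ) (1+u),
        HasDerivAt (fun y => -(4 / (1 + y))) (4 / (1 + x)^2) x := by
      intro x hx
      rw [hsub] at hx
      have hx1 : (0:ℝ) < 1 + x := by linarith [hx.1]
      have h0 : HasDerivAt (fun y : ℝ => 1 + y) 1 x := by
        simpa using (hasDerivAt_id x).const_add 1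
      have h2 := ((hasDerivAt_const x (4:ℝ)).div h0 hx1.ne').neg
      exact h2.congr_deriv (by ring)
    have hrhs : (2 * u / (2 + u)) = ∫ x in (1:ℝ)..(1+u), 4 / (1 + x)^2 := by
      rw [integral_eq_sub_of_hasDerivAt hderiv (by
        apply ContinuousOn.intervalIntegrable
        apply ContinuousOn.div continuousOn_const
        · fun_prop
        · intro x hx
          rw [hsub] at hx
          have : (0:ℝ) < 1 + x := by linarith [hx.1]
          positivity)]
      field_simp
      ring
    rw [hlog, hrhs]
    apply integral_mono_on (by linarith)
    · apply ContinuousOn.intervalIntegrable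
      rw [hsub]
      apply ContinuousOn.div continuousOn_const (by fun_prop)
      intro x hx
      have : (0:ℝ) < 1 + x := by linarith [hx.1]
      positivity
    · apply ContinuousOn.intervalIntegrable
      rw [hsub]
      apply ContinuousOn.inv₀ (by fun_prop)
      intro x hx; exact ne_of_gt (by linarith [hx.1])
    · intro x hx
      have hx1 : (1:ℝ) ≤ x := hx.1
      have hx0 : (0:ℝ) < x := by linarith
      rw [div_le_iff₀ (by positivity), inv_mul_eq_div, le_div_iff₀ hx0]
      nlinarith
  have h2u : (0:ℝ) < 2 + u := by linarith
  rw [div_le_iff₀ h2u] at key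
  nlinarith [key]

lemma exp_series_bound {c M x : ℝ} (hc : 0 ≤ c) (hM : 0 < M) (hx : |x| ≤ M) :
    Real.exp (c * x) ≤ 1 + c * x + x^2 / M^2 * (Real.exp (c * M) - c * M - 1) := by
  have hexp : ∀ y : ℝ, Real.exp y = ∑' n : ℕ, y ^ n / n.factorial := by
    intro y
    rw [Real.exp_eq_exp_ℝ, NormedSpace.exp_eq_tsum_div]
  have hsum : ∀ y : ℝ, Summable (fun n : ℕ => y ^ n / n.factorial) :=
    fun y => Real.summable_pow_div_factorial y
  have htail : ∀ y : ℝ, Real.exp y = 1 + y + ∑' n : ℕ, y ^ (n+2) / (n+2).factorial := by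
    intro y
    rw [hexp y, ← Summable.sum_add_tsum_nat_add 2 (hsum y)]
    simp [Finset.sum_range_succ]
  rw [htail (c*x), htail (c*M)]
  have hterm : ∀ n : ℕ, (c*x) ^ (n+2) / (n+2).factorial ≤
      x^2/M^2 * ((c*M) ^ (n+2) / (n+2).factorial) := by
    intro n
    rw [← mul_div_assoc]
    apply div_le_div_of_nonneg_right _ (by positivity)
    calc (c*x) ^ (n+2) ≤ |(c*x) ^ (n+2)| := le_abs_self _
      _ = c ^ (n+2) * |x| ^ (n+2) := by
          rw [abs_pow, abs_mul, mul_pow, abs_of_nonneg hc]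
      _ = c ^ (n+2) * (|x| ^ n * x ^ 2) := by rw [pow_add, pow_add, sq_abs x]
      _ ≤ c ^ (n+2) * (M ^ n * x ^ 2) := by
          apply mul_le_mul_of_nonneg_left _ (by positivity)
          exact mul_le_mul_of_nonneg_right (pow_le_pow_left₀ (abs_nonneg x) hx n) (sq_nonneg x)
      _ = x^2/M^2 * (c*M) ^ (n+2) := by
          rw [mul_pow]
          field_simp
          ring
  have h := Summable.tsum_le_tsum hterm ((summable_nat_add_iff 2).mpr (hsum (c*x)))
    (((summable_nat_add_iff 2).mpr (hsum (c*M))).mul_left _)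
  rw [tsum_mul_left] at h
  nlinarith [h]

open MeasureTheory ProbabilityTheory in
lemma mgf_bound {Ω : Type*} [MeasureSpace Ω] [IsProbabilityMeasure (ℙ : Measure Ω)]
    {Y : Ω → ℝ} (hY : Measurable Y) (hmean : ∫ ω, Y ω = 0) {M c : ℝ} (hM : 0 < M)
    (hc : 0 ≤ c) (hbd : ∀ᵐ ω, |Y ω| ≤ M) :
    mgf Y ℙ c ≤ Real.exp (variance Y ℙ * ((Real.exp (c*M) - c*M - 1)/M^2)) := by
  have hbd' : ∀ᵐ ω, ‖Y ω‖ ≤ M := by simpa [Real.norm_eq_abs] using hbd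
  have hmem2 : MemLp Y 2 ℙ :=
    (memLp_top_of_bound hY.aestronglyMeasurable M hbd').mono_exponent le_top
  have hintY : Integrable Y ℙ := hmem2.integrable (by norm_num)
  have hintY2 : Integrable (fun ω => (Y ω)^2) ℙ := by
    simpa [sq] using hmem2.integrable_sq
  set K := Real.exp (c*M) - c*M - 1 with hK
  have hexp_int : Integrable (fun ω => Real.exp (c * Y ω)) ℙ := by
    apply Integrable.mono' (integrable_const (Real.exp (c*M)))
      ((hY.const_mul c).exp).aestronglyMeasurable
    filter_upwards [hbd] with ω hω
    rw [Real.norm_eq_abs, abs_of_pos (Real.exp_pos _), Real.exp_le_exp]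
    exact mul_le_mul_of_nonneg_left (le_trans (le_abs_self _) hω) hc
  have hptwise : ∀ᵐ ω, Real.exp (c * Y ω) ≤ 1 + c * Y ω + (Y ω)^2 / M^2 * K := by
    filter_upwards [hbd] with ω hω
    exact exp_series_bound hc hM hω
  have hrhs_int : Integrable (fun ω => 1 + c * Y ω + (Y ω)^2 / M^2 * K) ℙ := by
    apply Integrable.add (Integrable.add (integrable_const 1) (hintY.const_mul c))
    have : (fun ω => (Y ω)^2 / M^2 * K) = fun ω => (K / M^2) * (Y ω)^2 := by
      funext ω; field_simp
    rw [this]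
    exact hintY2.const_mul _
  have hvareq : variance Y ℙ = ∫ ω, (Y ω)^2 ∂ℙ := by
    exact variance_of_integral_eq_zero hY.aemeasurable hmean
  calc mgf Y ℙ c = ∫ ω, Real.exp (c * Y ω) ∂ℙ := rfl
    _ ≤ ∫ ω, (1 + c * Y ω + (Y ω)^2 / M^2 * K) ∂ℙ :=
        integral_mono_ae hexp_int hrhs_int hptwise
    _ = 1 + c * (∫ ω, Y ω ∂ℙ) + (∫ ω, (Y ω)^2 ∂ℙ) * (K / M^2) := by
        have heq : (fun ω => (Y ω)^2 / M^2 * K) = fun ω => (K / M^2) * (Y ω)^2 := by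
          funext ω; field_simp
        have h1 : Integrable (fun ω => 1 + c * Y ω) ℙ :=
          (integrable_const 1).add (hintY.const_mul c)
        have h2 : Integrable (fun ω => (Y ω)^2 / M^2 * K) ℙ := by
          rw [heq]; exact hintY2.const_mul _
        have hc1 : Integrable (fun _ : Ω => (1:ℝ)) ℙ := integrable_const 1
        have hc2 : Integrable (fun ω => c * Y ω) ℙ := hintY.const_mul c
        rw [integral_add h1 h2, integral_add hc1 hc2, heq, integral_const_mul,
          integral_const_mul]
        simp only [integral_const, measure_univ, probReal_univ, ENNReal.toReal_one, smul_eq_mul, one_mul]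
        ring
    _ = 1 + variance Y ℙ * (K / M^2) := by rw [hmean, hvareq]; ring
    _ ≤ Real.exp (variance Y ℙ * (K / M^2)) := by
        linarith [Real.add_one_le_exp (variance Y ℙ * (K / M^2))]
open MeasureTheory ProbabilityTheory in
theorem stmt2 {Ω : Type*} [MeasureSpace Ω] [IsProbabilityMeasure (ℙ : Measure Ω)]
    {n : ℕ} (X : Fin n → Ω → ℝ)
    (hmeas : ∀ i, Measurable (X i))
    (hind : ProbabilityTheory.iIndepFun X ℙ)
    (hmean : ∀ i, ∫ ω, X i ω = 0)
    (σ M : ℝ) (hσ : 0 < σ) (hM : 0 < M)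
    (hvar : ProbabilityTheory.variance (fun ω => ∑ i, X i ω) ℙ ≤ σ ^ 2)
    (hbd : ∀ i, ∀ᵐ ω, |X i ω| ≤ M)
    (t : ℝ) (ht : 0 ≤ t) :
    (ℙ {ω | t ≤ ∑ i, X i ω}).toReal ≤
      Real.exp (-(t / (2 * M)) * Real.log (t * M / σ ^ 2 + 1)) := by
  set u : ℝ := t * M / σ ^ 2 with hu_def
  have hu : 0 ≤ u := by positivity
  have h1u : (0:ℝ) < 1 + u := by linarith
  set c : ℝ := Real.log (1 + u) / M with hc_def
  have hL : 0 ≤ Real.log (1 + u) := Real.log_nonneg (by linarith)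
  have hc : 0 ≤ c := div_nonneg hL hM.le
  set K : ℝ := Real.exp (c * M) - c * M - 1 with hK_def
  have hcM : c * M = Real.log (1 + u) := by
    rw [hc_def]; field_simp
  have hK_eval : K = u - Real.log (1 + u) := by
    rw [hK_def, hcM, Real.exp_log h1u]; ring
  have hK_nonneg : 0 ≤ K := by
    rw [hK_def]
    have := Real.add_one_le_exp (c * M)
    linarith
  -- function-sum form
  have hsum_eq : (fun ω => ∑ i, X i ω) = ∑ i, X i := by
    funext ω; simp
  -- MemLp 2 for each
  have hmem2 : ∀ i, MemLp (X i) 2 ℙ := fun i =>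
    (memLp_top_of_bound (hmeas i).aestronglyMeasurable M
      (by simpa [Real.norm_eq_abs] using hbd i)).mono_exponent le_top
  -- integrability of exp(c * X i)
  have hint_exp : ∀ i, Integrable (fun ω => Real.exp (c * X i ω)) ℙ := by
    intro i
    apply Integrable.mono' (integrable_const (Real.exp (c*M)))
      (((hmeas i).const_mul c).exp).aestronglyMeasurable
    filter_upwards [hbd i] with ω hω
    rw [Real.norm_eq_abs, abs_of_pos (Real.exp_pos _), Real.exp_le_exp]
    exact mul_le_mul_of_nonneg_left (le_trans (le_abs_self _) hω) hc
  have hint_expS : Integrable (fun ω => Real.exp (c * (∑ i, X i) ω)) ℙ :=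
    hind.integrable_exp_mul_sum hmeas (fun i _ => hint_exp i)
  -- Chernoff
  have hchern := measure_ge_le_exp_mul_mgf (μ := ℙ) (X := ∑ i, X i) t hc hint_expS
  simp only [Finset.sum_apply] at hchern
  -- mgf bound
  have hmgf : mgf (∑ i, X i) ℙ c ≤ Real.exp (σ^2 * (K / M^2)) := by
    rw [hind.mgf_sum hmeas]
    have hvar_sum : ∑ i, variance (X i) ℙ ≤ σ ^ 2 := by
      rw [← IndepFun.variance_sum (fun i _ => hmem2 i)
        (fun i _ j _ hij => hind.indepFun hij)]
      rw [← hsum_eq]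
      exact hvar
    calc ∏ i, mgf (X i) ℙ c
        ≤ ∏ i, Real.exp (variance (X i) ℙ * (K / M^2)) := by
          apply Finset.prod_le_prod (fun i _ => mgf_nonneg)
          intro i _
          have := mgf_bound (hmeas i) (hmean i) hM hc (hbd i)
          rwa [← hK_def] at this
      _ = Real.exp (∑ i, variance (X i) ℙ * (K / M^2)) := by
          rw [← Real.exp_sum]
      _ ≤ Real.exp (σ^2 * (K / M^2)) := by
          rw [Real.exp_le_exp, ← Finset.sum_mul]
          exact mul_le_mul_of_nonneg_right hvar_sum (by positivity)
  -- combine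
  have hcomb : (ℙ {ω | t ≤ ∑ i, X i ω}).toReal ≤
      Real.exp (σ^2 * (K / M^2) - c * t) := by
    calc (ℙ {ω | t ≤ ∑ i, X i ω}).toReal
        ≤ Real.exp (-c * t) * mgf (∑ i, X i) ℙ c := hchern
      _ ≤ Real.exp (-c * t) * Real.exp (σ^2 * (K / M^2)) := by
          exact mul_le_mul_of_nonneg_left hmgf (Real.exp_pos _).le
      _ = Real.exp (σ^2 * (K / M^2) - c * t) := by
          rw [← Real.exp_add]; ring_nf
  refine hcomb.trans ?_
  rw [Real.exp_le_exp]
  set L : ℝ := Real.log (1 + u) with hL_def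
  have htu : t = u * σ^2 / M := by
    rw [hu_def]; field_simp
  have hkey := log_ineq_aux hu
  rw [← hL_def] at hkey
  have key2 : u - L - u*L ≤ -(u/2)*L := by nlinarith [hkey]
  have hgoal : -(t / (2 * M)) * Real.log (u + 1) = (σ^2/M^2) * (-(u/2)*L) := by
    rw [htu, hL_def, add_comm u 1]
    field_simp
  have hlhs : σ^2 * (K / M^2) - c * t = (σ^2/M^2) * (u - L - u*L) := by
    rw [hK_eval, htu, hc_def]
    field_simp
  rw [hgoal, hlhs]
  exact mul_le_mul_of_nonneg_left key2 (by positivity)
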